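/- Let ψ be a (0,2)-tensor field pure with respect to a (1,1)-tensor field φ, i.e., ψ(φX,Y) = ψ(X,φY) for all vector fields X, Y. Then the map (X,Y,Z) ↦ (L_{φ(X)}ψ − L_X(ψ∘₁φ))(Y,Z) is a (0,3)-tensor field (C^∞-linear in each of X, Y, Z). -/

import Mathlib

open scoped BigOperators

noncomputable section

/-- Points of the model space `ℝ^m`. -/
abbrev Pt (m : ℕ) := Fin m → ℝ
/-- Vector fields (or 1-forms) on `ℝ^m`, given by their components. -/
abbrev VF (m : ℕ) := Pt m → Fin m → ℝ
/-- (0,2)-tensor fields (or (1,1)-tensor fields) on `ℝ^m`, given by components. -/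
abbrev T02 (m : ℕ) := Pt m → Fin m → Fin m → ℝ
/-- (0,3)- or (1,2)-tensor fields on `ℝ^m`, given by components. -/
abbrev T3 (m : ℕ) := Pt m → Fin m → Fin m → Fin m → ℝ

variable {m : ℕ}

/-- `i`-th partial derivative of a scalar function. -/
def pd (i : Fin m) (f : Pt m → ℝ) (x : Pt m) : ℝ :=
  fderiv ℝ f x (Pi.single i 1)

/-- Derivative of a function `f` along a vector field `X`. -/
def Xdot (X : VF m) (f : Pt m → ℝ) (x : Pt m) : ℝ :=
  ∑ k, X x k * pd k f x

/-- Lie bracket of vector fields, in components. -/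
def lieB (X Y : VF m) : VF m := fun x i =>
  ∑ k, (X x k * pd k (fun y => Y y i) x - Y x k * pd k (fun y => X y i) x)

/-- Evaluation `ψ(X)` of a 1-form on a vector field. -/
def ev1 (ψ X : VF m) (x : Pt m) : ℝ := ∑ i, ψ x i * X x i

/-- Exterior derivative of a function, as a 1-form. -/
def dF (f : Pt m → ℝ) : VF m := fun x i => pd i f x

/-- Exterior derivative of a 1-form, as a 2-form: `(dψ)_{ij} = ∂_i ψ_j - ∂_j ψ_i`. -/
def d2 (ψ : VF m) : T02 m := fun x i j =>
  pd i (fun y => ψ y j) x - pd j (fun y => ψ y i) x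

/-- Evaluation of a (0,2)-tensor field on two vector fields. -/
def ev2 (T : T02 m) (X Y : VF m) (x : Pt m) : ℝ :=
  ∑ i, ∑ j, T x i j * X x i * Y x j

/-- Lie derivative of a 1-form `ψ` along `X`, evaluated on `Y`:
`(L_X ψ)(Y) = X·(ψ(Y)) - ψ([X,Y])`. -/
def lie1 (X ψ Y : VF m) (x : Pt m) : ℝ :=
  Xdot X (ev1 ψ Y) x - ev1 ψ (lieB X Y) x

/-- Lie derivative of a (0,2)-tensor field `T` along `X`, evaluated on `Y, Z`:
`(L_X T)(Y,Z) = X·T(Y,Z) - T([X,Y],Z) - T(Y,[X,Z])`. -/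
def lie2 (X : VF m) (T : T02 m) (Y Z : VF m) (x : Pt m) : ℝ :=
  Xdot X (ev2 T Y Z) x - ev2 T (lieB X Y) Z x - ev2 T Y (lieB X Z) x

/-- Application of a (1,1)-tensor field to a vector field: `(φX)^i = φ^i_j X^j`. -/
def appT (φ : T02 m) (X : VF m) : VF m := fun x i => ∑ j, φ x i j * X x j

/-- `(ψ∘₁φ)(X,Y) = ψ(φX,Y)`, in components `(ψ∘₁φ)_{ij} = ψ_{aj} φ^a_i`. -/
def comp1 (ψ φ : T02 m) : T02 m := fun x i j => ∑ a, ψ x a j * φ x a i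

/-- `(ψ∘₂φ)(X,Y) = ψ(X,φY)`, in components `(ψ∘₂φ)_{ij} = ψ_{ia} φ^a_j`. -/
def comp2 (ψ φ : T02 m) : T02 m := fun x i j => ∑ a, ψ x i a * φ x a j

/-- Composition `ψ∘φ` of a 1-form with a (1,1)-tensor field:  `(ψ∘φ)_i = ψ_a φ^a_i`. -/
def compF (ψ : VF m) (φ : T02 m) : VF m := fun x i => ∑ a, ψ x a * φ x a i

/-- Exterior derivative of a 2-form `T`, as a 3-form:
`(dT)_{ijk} = ∂_i T_{jk} - ∂_j T_{ik} + ∂_k T_{ij}`. -/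
def d3 (T : T02 m) : T3 m := fun x i j k =>
  pd i (fun y => T y j k) x - pd j (fun y => T y i k) x + pd k (fun y => T y i j) x

/-- Evaluation of a (0,3)-tensor field on three vector fields. -/
def ev3 (U : T3 m) (X Y Z : VF m) (x : Pt m) : ℝ :=
  ∑ i, ∑ j, ∑ k, U x i j k * X x i * Y x j * Z x k

/-- Pointwise sum of vector fields. -/
def addV (X Y : VF m) : VF m := fun x i => X x i + Y x i

/-- Pointwise multiplication of a vector field by a function. -/
def smulV (f : Pt m → ℝ) (X : VF m) : VF m := fun x i => f x * X x i
section Helpers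

variable {m : ℕ}

lemma cdV {X : VF m} (h : ContDiff ℝ (⊤ : ℕ∞) X) (i : Fin m) :
    ContDiff ℝ (⊤ : ℕ∞) fun y => X y i := contDiff_pi.mp h i

lemma cdT {T : T02 m} (h : ContDiff ℝ (⊤ : ℕ∞) T) (i j : Fin m) :
    ContDiff ℝ (⊤ : ℕ∞) fun y => T y i j := contDiff_pi.mp (contDiff_pi.mp h i) j

lemma dA {f : Pt m → ℝ} (h : ContDiff ℝ (⊤ : ℕ∞) f) (x : Pt m) :
    DifferentiableAt ℝ f x := (h.differentiable (by simp)).differentiableAt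

lemma pd_add {f g : Pt m → ℝ} {x : Pt m} (i : Fin m)
    (hf : DifferentiableAt ℝ f x) (hg : DifferentiableAt ℝ g x) :
    pd i (fun y => f y + g y) x = pd i f x + pd i g x := by
  simp [pd, fderiv_fun_add hf hg]

lemma pd_mul {f g : Pt m → ℝ} {x : Pt m} (i : Fin m)
    (hf : DifferentiableAt ℝ f x) (hg : DifferentiableAt ℝ g x) :
    pd i (fun y => f y * g y) x = f x * pd i g x + pd i f x * g x := by
  simp [pd, fderiv_fun_mul hf hg]; ring

lemma cd_ev2 {T : T02 m} {Y Z : VF m} (hT : ContDiff ℝ (⊤ : ℕ∞) T)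
    (hY : ContDiff ℝ (⊤ : ℕ∞) Y) (hZ : ContDiff ℝ (⊤ : ℕ∞) Z) :
    ContDiff ℝ (⊤ : ℕ∞) (ev2 T Y Z) := by
  unfold ev2
  exact ContDiff.sum fun i _ => ContDiff.sum fun j _ =>
    (((cdT hT i j).mul (cdV hY i)).mul (cdV hZ j))

lemma cd_comp1 {ψ φ : T02 m} (hψ : ContDiff ℝ (⊤ : ℕ∞) ψ)
    (hφ : ContDiff ℝ (⊤ : ℕ∞) φ) : ContDiff ℝ (⊤ : ℕ∞) (comp1 ψ φ) := by
  unfold comp1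
  exact contDiff_pi.mpr fun i => contDiff_pi.mpr fun j =>
    ContDiff.sum fun a _ => (cdT hψ a j).mul (cdT hφ a i)

lemma cd_appT {φ : T02 m} {X : VF m} (hφ : ContDiff ℝ (⊤ : ℕ∞) φ)
    (hX : ContDiff ℝ (⊤ : ℕ∞) X) : ContDiff ℝ (⊤ : ℕ∞) (appT φ X) := by
  unfold appT
  exact contDiff_pi.mpr fun i => ContDiff.sum fun j _ => (cdT hφ i j).mul (cdV hX j)

lemma Xdot_addF {X : VF m} {g g' : Pt m → ℝ} {x : Pt m}
    (hg : DifferentiableAt ℝ g x) (hg' : DifferentiableAt ℝ g' x) :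
    Xdot X (fun y => g y + g' y) x = Xdot X g x + Xdot X g' x := by
  unfold Xdot
  rw [← Finset.sum_add_distrib]
  exact Finset.sum_congr rfl fun k _ => by rw [pd_add k hg hg']; ring

lemma Xdot_mulF {X : VF m} {f g : Pt m → ℝ} {x : Pt m}
    (hf : DifferentiableAt ℝ f x) (hg : DifferentiableAt ℝ g x) :
    Xdot X (fun y => f y * g y) x = f x * Xdot X g x + Xdot X f x * g x := by
  unfold Xdot
  rw [Finset.mul_sum, Finset.sum_mul, ← Finset.sum_add_distrib]
  exact Finset.sum_congr rfl fun k _ => by rw [pd_mul k hf hg]; ring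

lemma Xdot_addX {X X' : VF m} {g : Pt m → ℝ} {x : Pt m} :
    Xdot (addV X X') g x = Xdot X g x + Xdot X' g x := by
  unfold Xdot addV
  rw [← Finset.sum_add_distrib]
  exact Finset.sum_congr rfl fun k _ => by ring

lemma Xdot_smulX {f : Pt m → ℝ} {X : VF m} {g : Pt m → ℝ} {x : Pt m} :
    Xdot (smulV f X) g x = f x * Xdot X g x := by
  unfold Xdot smulV
  rw [Finset.mul_sum]
  exact Finset.sum_congr rfl fun k _ => by ring

lemma lieB_addX {X X' Y : VF m} {x : Pt m} (i : Fin m)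
    (hX : ContDiff ℝ (⊤ : ℕ∞) X) (hX' : ContDiff ℝ (⊤ : ℕ∞) X') :
    lieB (addV X X') Y x i = lieB X Y x i + lieB X' Y x i := by
  unfold lieB addV
  rw [← Finset.sum_add_distrib]
  refine Finset.sum_congr rfl fun k _ => ?_
  rw [pd_add k (dA (cdV hX i) x) (dA (cdV hX' i) x)]; ring

lemma lieB_addY {X Y Y' : VF m} {x : Pt m} (i : Fin m)
    (hY : ContDiff ℝ (⊤ : ℕ∞) Y) (hY' : ContDiff ℝ (⊤ : ℕ∞) Y') :
    lieB X (addV Y Y') x i = lieB X Y x i + lieB X Y' x i := by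
  unfold lieB addV
  rw [← Finset.sum_add_distrib]
  refine Finset.sum_congr rfl fun k _ => ?_
  rw [pd_add k (dA (cdV hY i) x) (dA (cdV hY' i) x)]; ring

lemma lieB_smulX {f : Pt m → ℝ} {X Y : VF m} {x : Pt m} (i : Fin m)
    (hf : ContDiff ℝ (⊤ : ℕ∞) f) (hX : ContDiff ℝ (⊤ : ℕ∞) X) :
    lieB (smulV f X) Y x i = f x * lieB X Y x i + (-(Xdot Y f x)) * X x i := by
  unfold lieB smulV Xdot
  have h : ∀ k : Fin m, f x * X x k * pd k (fun y => Y y i) x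
      - Y x k * pd k (fun y => f y * X y i) x
      = f x * (X x k * pd k (fun y => Y y i) x - Y x k * pd k (fun y => X y i) x)
        - Y x k * pd k f x * X x i := fun k => by
    rw [pd_mul k (dA hf x) (dA (cdV hX i) x)]; ring
  rw [Finset.sum_congr rfl fun k _ => h k, Finset.sum_sub_distrib, ← Finset.mul_sum,
    ← Finset.sum_mul]
  ring

lemma lieB_smulY {f : Pt m → ℝ} {X Y : VF m} {x : Pt m} (i : Fin m)
    (hf : ContDiff ℝ (⊤ : ℕ∞) f) (hY : ContDiff ℝ (⊤ : ℕ∞) Y) :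
    lieB X (smulV f Y) x i = f x * lieB X Y x i + Xdot X f x * Y x i := by
  unfold lieB smulV Xdot
  rw [Finset.mul_sum, Finset.sum_mul, ← Finset.sum_add_distrib]
  refine Finset.sum_congr rfl fun k _ => ?_
  rw [pd_mul k (dA hf x) (dA (cdV hY i) x)]; ring

lemma ev2_lin1 {T : T02 m} {W W1 W2 Z : VF m} {x : Pt m} {a b : ℝ}
    (h : ∀ i, W x i = a * W1 x i + b * W2 x i) :
    ev2 T W Z x = a * ev2 T W1 Z x + b * ev2 T W2 Z x := by
  unfold ev2
  rw [Finset.mul_sum, Finset.mul_sum, ← Finset.sum_add_distrib]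
  refine Finset.sum_congr rfl fun i _ => ?_
  rw [Finset.mul_sum, Finset.mul_sum, ← Finset.sum_add_distrib]
  refine Finset.sum_congr rfl fun j _ => ?_
  rw [h i]; ring

lemma ev2_lin2 {T : T02 m} {Y W W1 W2 : VF m} {x : Pt m} {a b : ℝ}
    (h : ∀ j, W x j = a * W1 x j + b * W2 x j) :
    ev2 T Y W x = a * ev2 T Y W1 x + b * ev2 T Y W2 x := by
  unfold ev2
  rw [Finset.mul_sum, Finset.mul_sum, ← Finset.sum_add_distrib]
  refine Finset.sum_congr rfl fun i _ => ?_
  rw [Finset.mul_sum, Finset.mul_sum, ← Finset.sum_add_distrib]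
  refine Finset.sum_congr rfl fun j _ => ?_
  rw [h j]; ring

lemma ev2_add1_fun {T : T02 m} {Y Y' Z : VF m} :
    ev2 T (addV Y Y') Z = fun y => ev2 T Y Z y + ev2 T Y' Z y := by
  funext y
  unfold ev2 addV
  rw [← Finset.sum_add_distrib]
  refine Finset.sum_congr rfl fun i _ => ?_
  rw [← Finset.sum_add_distrib]
  exact Finset.sum_congr rfl fun j _ => by ring

lemma ev2_smul1_fun {T : T02 m} {f : Pt m → ℝ} {Y Z : VF m} :
    ev2 T (smulV f Y) Z = fun y => f y * ev2 T Y Z y := by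
  funext y
  unfold ev2 smulV
  rw [Finset.mul_sum]
  refine Finset.sum_congr rfl fun i _ => ?_
  rw [Finset.mul_sum]
  exact Finset.sum_congr rfl fun j _ => by ring

lemma ev2_add2_fun {T : T02 m} {Y Z Z' : VF m} :
    ev2 T Y (addV Z Z') = fun y => ev2 T Y Z y + ev2 T Y Z' y := by
  funext y
  unfold ev2 addV
  rw [← Finset.sum_add_distrib]
  refine Finset.sum_congr rfl fun i _ => ?_
  rw [← Finset.sum_add_distrib]
  exact Finset.sum_congr rfl fun j _ => by ring

lemma ev2_smul2_fun {T : T02 m} {f : Pt m → ℝ} {Y Z : VF m} :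
    ev2 T Y (smulV f Z) = fun y => f y * ev2 T Y Z y := by
  funext y
  unfold ev2 smulV
  rw [Finset.mul_sum]
  refine Finset.sum_congr rfl fun i _ => ?_
  rw [Finset.mul_sum]
  exact Finset.sum_congr rfl fun j _ => by ring

lemma sum3_rot (f : Fin m → Fin m → Fin m → ℝ) :
    ∑ i, ∑ j, ∑ a, f i j a = ∑ a, ∑ j, ∑ i, f i j a := by
  rw [Finset.sum_comm]
  rw [show (∑ j, ∑ i, ∑ a, f i j a) = ∑ j, ∑ a, ∑ i, f i j a from
    Finset.sum_congr rfl fun _ _ => Finset.sum_comm]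
  rw [Finset.sum_comm]

lemma ev2_comp1 {ψ φ : T02 m} {X Z : VF m} {x : Pt m} :
    ev2 (comp1 ψ φ) X Z x = ev2 ψ (appT φ X) Z x := by
  unfold ev2 comp1 appT
  calc ∑ i, ∑ j, (∑ a, ψ x a j * φ x a i) * X x i * Z x j
      = ∑ i, ∑ j, ∑ a, ψ x a j * φ x a i * X x i * Z x j := by
        refine Finset.sum_congr rfl fun i _ => Finset.sum_congr rfl fun j _ => ?_
        rw [Finset.sum_mul, Finset.sum_mul]
    _ = ∑ a, ∑ j, ∑ i, ψ x a j * φ x a i * X x i * Z x j := sum3_rot _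
    _ = ∑ a, ∑ j, ψ x a j * (∑ i, φ x a i * X x i) * Z x j := by
        refine Finset.sum_congr rfl fun a _ => Finset.sum_congr rfl fun j _ => ?_
        rw [Finset.mul_sum, Finset.sum_mul]
        exact Finset.sum_congr rfl fun i _ => by ring

lemma lie2_add1 {X X' : VF m} {T : T02 m} {Y Z : VF m} {x : Pt m}
    (hX : ContDiff ℝ (⊤ : ℕ∞) X) (hX' : ContDiff ℝ (⊤ : ℕ∞) X') :
    lie2 (addV X X') T Y Z x = lie2 X T Y Z x + lie2 X' T Y Z x := by
  unfold lie2
  rw [Xdot_addX,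
    ev2_lin1 (a := 1) (b := 1) (W := lieB (addV X X') Y) (W1 := lieB X Y)
      (W2 := lieB X' Y) (Z := Z) (fun i => by rw [lieB_addX i hX hX']; ring),
    ev2_lin2 (a := 1) (b := 1) (W := lieB (addV X X') Z) (W1 := lieB X Z)
      (W2 := lieB X' Z) (Y := Y) (fun j => by rw [lieB_addX j hX hX']; ring)]
  ring

lemma lie2_smul1 {f : Pt m → ℝ} {X : VF m} {T : T02 m} {Y Z : VF m} {x : Pt m}
    (hf : ContDiff ℝ (⊤ : ℕ∞) f) (hX : ContDiff ℝ (⊤ : ℕ∞) X) :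
    lie2 (smulV f X) T Y Z x = f x * lie2 X T Y Z x
      + Xdot Y f x * ev2 T X Z x + Xdot Z f x * ev2 T Y X x := by
  unfold lie2
  rw [Xdot_smulX,
    ev2_lin1 (a := f x) (b := -(Xdot Y f x)) (W := lieB (smulV f X) Y)
      (W1 := lieB X Y) (W2 := X) (Z := Z) (fun i => lieB_smulX i hf hX),
    ev2_lin2 (a := f x) (b := -(Xdot Z f x)) (W := lieB (smulV f X) Z)
      (W1 := lieB X Z) (W2 := X) (Y := Y) (fun j => lieB_smulX j hf hX)]
  ring

lemma lie2_add2 {X : VF m} {T : T02 m} {Y Y' Z : VF m} {x : Pt m}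
    (hT : ContDiff ℝ (⊤ : ℕ∞) T) (hY : ContDiff ℝ (⊤ : ℕ∞) Y)
    (hY' : ContDiff ℝ (⊤ : ℕ∞) Y') (hZ : ContDiff ℝ (⊤ : ℕ∞) Z) :
    lie2 X T (addV Y Y') Z x = lie2 X T Y Z x + lie2 X T Y' Z x := by
  unfold lie2
  rw [ev2_add1_fun, Xdot_addF (dA (cd_ev2 hT hY hZ) x) (dA (cd_ev2 hT hY' hZ) x),
    ev2_lin1 (a := 1) (b := 1) (W := lieB X (addV Y Y')) (W1 := lieB X Y)
      (W2 := lieB X Y') (Z := Z) (fun i => by rw [lieB_addY i hY hY']; ring),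
    ev2_lin1 (a := 1) (b := 1) (W := addV Y Y') (W1 := Y) (W2 := Y')
      (Z := lieB X Z) (fun i => by unfold addV; ring)]
  ring

lemma lie2_smul2 {f : Pt m → ℝ} {X : VF m} {T : T02 m} {Y Z : VF m} {x : Pt m}
    (hT : ContDiff ℝ (⊤ : ℕ∞) T) (hf : ContDiff ℝ (⊤ : ℕ∞) f)
    (hY : ContDiff ℝ (⊤ : ℕ∞) Y) (hZ : ContDiff ℝ (⊤ : ℕ∞) Z) :
    lie2 X T (smulV f Y) Z x = f x * lie2 X T Y Z x := by
  unfold lie2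
  rw [ev2_smul1_fun, Xdot_mulF (dA hf x) (dA (cd_ev2 hT hY hZ) x),
    ev2_lin1 (a := f x) (b := Xdot X f x) (W := lieB X (smulV f Y))
      (W1 := lieB X Y) (W2 := Y) (Z := Z) (fun i => lieB_smulY i hf hY),
    ev2_lin1 (a := f x) (b := 0) (W := smulV f Y) (W1 := Y) (W2 := Y)
      (Z := lieB X Z) (fun i => by unfold smulV; ring)]
  ring

lemma lie2_add3 {X : VF m} {T : T02 m} {Y Z Z' : VF m} {x : Pt m}
    (hT : ContDiff ℝ (⊤ : ℕ∞) T) (hY : ContDiff ℝ (⊤ : ℕ∞) Y)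
    (hZ : ContDiff ℝ (⊤ : ℕ∞) Z) (hZ' : ContDiff ℝ (⊤ : ℕ∞) Z') :
    lie2 X T Y (addV Z Z') x = lie2 X T Y Z x + lie2 X T Y Z' x := by
  unfold lie2
  rw [ev2_add2_fun, Xdot_addF (dA (cd_ev2 hT hY hZ) x) (dA (cd_ev2 hT hY hZ') x),
    ev2_lin2 (a := 1) (b := 1) (W := lieB X (addV Z Z')) (W1 := lieB X Z)
      (W2 := lieB X Z') (Y := Y) (fun j => by rw [lieB_addY j hZ hZ']; ring),
    ev2_lin2 (a := 1) (b := 1) (W := addV Z Z') (W1 := Z) (W2 := Z')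
      (Y := lieB X Y) (fun j => by unfold addV; ring)]
  ring

lemma lie2_smul3 {f : Pt m → ℝ} {X : VF m} {T : T02 m} {Y Z : VF m} {x : Pt m}
    (hT : ContDiff ℝ (⊤ : ℕ∞) T) (hf : ContDiff ℝ (⊤ : ℕ∞) f)
    (hY : ContDiff ℝ (⊤ : ℕ∞) Y) (hZ : ContDiff ℝ (⊤ : ℕ∞) Z) :
    lie2 X T Y (smulV f Z) x = f x * lie2 X T Y Z x := by
  unfold lie2
  rw [ev2_smul2_fun, Xdot_mulF (dA hf x) (dA (cd_ev2 hT hY hZ) x),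
    ev2_lin2 (a := f x) (b := Xdot X f x) (W := lieB X (smulV f Z))
      (W1 := lieB X Z) (W2 := Z) (Y := Y) (fun j => lieB_smulY j hf hZ),
    ev2_lin2 (a := f x) (b := 0) (W := smulV f Z) (W1 := Z) (W2 := Z)
      (Y := lieB X Y) (fun j => by unfold smulV; ring)]
  ring

lemma appT_addV {φ : T02 m} {X X' : VF m} :
    appT φ (addV X X') = addV (appT φ X) (appT φ X') := by
  funext y i
  unfold appT addV
  rw [← Finset.sum_add_distrib]
  exact Finset.sum_congr rfl fun j _ => by ring

lemma appT_smulV {φ : T02 m} {f : Pt m → ℝ} {X : VF m} :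
    appT φ (smulV f X) = smulV f (appT φ X) := by
  funext y i
  unfold appT smulV
  rw [Finset.mul_sum]
  exact Finset.sum_congr rfl fun j _ => by ring

end Helpers

/-- Theorem 3.3 (Yano–Ako): if the (0,2)-tensor field `ψ` is pure with respect
to the (1,1)-tensor field `φ`, i.e. `ψ(φX,Y) = ψ(X,φY)` for all vector fields
`X, Y`, then `(X,Y,Z) ↦ (L_{φ(X)}ψ − L_X(ψ∘₁φ))(Y,Z)` is a (0,3)-tensor
field, i.e. `C^∞`-linear in each of `X, Y, Z`. -/
theorem stmt15 (m : ℕ) (φ ψ : T02 m)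
    (hφ : ContDiff ℝ (⊤ : ℕ∞) φ) (hψ : ContDiff ℝ (⊤ : ℕ∞) ψ)
    (hpure : ∀ X Y : VF m, ∀ x : Pt m,
      ev2 ψ (appT φ X) Y x = ev2 ψ X (appT φ Y) x) :
    ∀ (f : Pt m → ℝ), ContDiff ℝ (⊤ : ℕ∞) f →
    ∀ (X X' Y Z : VF m), ContDiff ℝ (⊤ : ℕ∞) X → ContDiff ℝ (⊤ : ℕ∞) X' →
      ContDiff ℝ (⊤ : ℕ∞) Y → ContDiff ℝ (⊤ : ℕ∞) Z →
    ∀ x : Pt m,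
      (lie2 (appT φ (addV X X')) ψ Y Z x - lie2 (addV X X') (comp1 ψ φ) Y Z x
        = (lie2 (appT φ X) ψ Y Z x - lie2 X (comp1 ψ φ) Y Z x)
          + (lie2 (appT φ X') ψ Y Z x - lie2 X' (comp1 ψ φ) Y Z x)) ∧
      (lie2 (appT φ (smulV f X)) ψ Y Z x - lie2 (smulV f X) (comp1 ψ φ) Y Z x
        = f x * (lie2 (appT φ X) ψ Y Z x - lie2 X (comp1 ψ φ) Y Z x)) ∧
      (lie2 (appT φ X) ψ (addV Y X') Z x - lie2 X (comp1 ψ φ) (addV Y X') Z x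
        = (lie2 (appT φ X) ψ Y Z x - lie2 X (comp1 ψ φ) Y Z x)
          + (lie2 (appT φ X) ψ X' Z x - lie2 X (comp1 ψ φ) X' Z x)) ∧
      (lie2 (appT φ X) ψ (smulV f Y) Z x - lie2 X (comp1 ψ φ) (smulV f Y) Z x
        = f x * (lie2 (appT φ X) ψ Y Z x - lie2 X (comp1 ψ φ) Y Z x)) ∧
      (lie2 (appT φ X) ψ Y (addV Z X') x - lie2 X (comp1 ψ φ) Y (addV Z X') x
        = (lie2 (appT φ X) ψ Y Z x - lie2 X (comp1 ψ φ) Y Z x)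
          + (lie2 (appT φ X) ψ Y X' x - lie2 X (comp1 ψ φ) Y X' x)) ∧
      (lie2 (appT φ X) ψ Y (smulV f Z) x - lie2 X (comp1 ψ φ) Y (smulV f Z) x
        = f x * (lie2 (appT φ X) ψ Y Z x - lie2 X (comp1 ψ φ) Y Z x)) := by

  intro f hf X X' Y Z hX hX' hY hZ x
  have hφX := cd_appT hφ hX
  have hφX' := cd_appT hφ hX'
  have hc := cd_comp1 hψ hφ
  refine ⟨?_, ?_, ?_, ?_, ?_, ?_⟩
  · rw [appT_addV, lie2_add1 hφX hφX', lie2_add1 hX hX']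
    ring
  · rw [appT_smulV, lie2_smul1 hf hφX, lie2_smul1 hf hX,
      ev2_comp1 (X := X) (Z := Z),
      ev2_comp1 (X := Y) (Z := X), hpure Y X x]
    ring
  · rw [lie2_add2 hψ hY hX' hZ, lie2_add2 hc hY hX' hZ]
    ring
  · rw [lie2_smul2 hψ hf hY hZ, lie2_smul2 hc hf hY hZ]
    ring
  · rw [lie2_add3 hψ hY hZ hX', lie2_add3 hc hY hZ hX']
    ring
  · rw [lie2_smul3 hψ hf hY hZ, lie2_smul3 hc hf hY hZ]
    ring
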